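/- Let Ω ⊂ ℝⁿ be open, {a_i}_{i=1}^l distinct points in Ω, and ρ_a := min({½|a_i−a_j| : i≠j} ∪ {dist(a_i,∂Ω) : i} ∪ {1}). Suppose {ξ_i}_{i=1}^l ⊂ Ω and d_1,…,d_l ∈ {±1} satisfy ‖Σ_i d_i(δ_{a_i} − δ_{ξ_i})‖_{W^{-1,1}(Ω)} ≤ ρ_a/4. Then after possibly relabelling the ξ_i, one has ‖Σ_i d_i(δ_{a_i} − δ_{ξ_i})‖_{W^{-1,1}(Ω)} = Σ_{i=1}^l |a_i − ξ_i|. -/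

import Mathlib

open Metric Set MeasureTheory

/-- The `W^{-1,1}(Ω)` norm of a linear functional `pair` on Lipschitz test functions:
the supremum of pairings against `φ ∈ W₀^{1,∞}(Ω)` with `max(‖φ‖_∞, ‖∇φ‖_∞) ≤ 1`. -/
noncomputable def W11norm {n : ℕ} (Ω : Set (EuclideanSpace ℝ (Fin n)))
    (pair : (EuclideanSpace ℝ (Fin n) → ℝ) → ℝ) : ℝ :=
  sSup {s | ∃ φ : EuclideanSpace ℝ (Fin n) → ℝ,
    LipschitzWith 1 φ ∧ (∀ x, |φ x| ≤ 1) ∧ tsupport φ ⊆ Ω ∧ s = pair φ}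

lemma ind_integrable (t a b : ℝ) :
    IntegrableOn (fun r => if t < r then (1:ℝ) else 0) (Ioc a b) volume := by
  have : (fun r => if t < r then (1:ℝ) else 0) = (Ioi t).indicator (fun _ => 1) := by
    ext r; simp [Set.indicator_apply, Set.mem_Ioi]
  rw [this]
  exact (integrableOn_const measure_Ioc_lt_top.ne).indicator measurableSet_Ioi

lemma ind_integral (t a b : ℝ) (hab : a ≤ b) :
    ∫ r in Ioc a b, (if t < r then (1:ℝ) else 0) =
      max (b - t) 0 - max (a - t) 0 := by
  have h1 : (fun r => if t < r then (1:ℝ) else 0) = (Ioi t).indicator (fun _ => 1) := by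
    ext r; simp [Set.indicator_apply, Set.mem_Ioi]
  rw [h1, MeasureTheory.integral_indicator measurableSet_Ioi]
  rw [Measure.restrict_restrict measurableSet_Ioi]
  have h2 : Ioi t ∩ Ioc a b = Ioc (max a t) b := by
    rw [Set.inter_comm]; exact Set.Ioc_inter_Ioi
  rw [h2]
  simp only [MeasureTheory.setIntegral_const, smul_eq_mul, mul_one, measureReal_def, Real.volume_Ioc]
  rcases le_total t a with h | h
  · rw [max_eq_left h, ENNReal.toReal_ofReal (by linarith),
      max_eq_left (by linarith), max_eq_left (by linarith)]; ring
  · rw [max_eq_right h]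
    rcases le_total t b with h' | h'
    · rw [ENNReal.toReal_ofReal (by linarith), max_eq_left (by linarith),
        max_eq_right (by linarith)]; ring
    · rw [show ENNReal.ofReal (b - t) = 0 by simp [ENNReal.ofReal_eq_zero]; linarith,
        max_eq_right (by linarith), max_eq_right (by linarith)]; simp

lemma exists_threshold {m : ℕ} (ε t : Fin m → ℝ) (a b : ℝ) (hab : a ≤ b)
    (hpos : 0 < ∑ j, ε j * (max (b - t j) 0 - max (a - t j) 0)) :
    ∃ r, a < r ∧ r ≤ b ∧ 0 < ∑ j, (if t j < r then ε j else 0) := by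
  by_contra hcon
  push_neg at hcon
  have hint : ∫ r in Ioc a b, (∑ j, if t j < r then ε j else 0) =
      ∑ j, ε j * (max (b - t j) 0 - max (a - t j) 0) := by
    rw [MeasureTheory.integral_finset_sum]
    · refine Finset.sum_congr rfl fun j _ => ?_
      have : (fun r => if t j < r then ε j else 0) =
          (fun r => ε j * (if t j < r then (1:ℝ) else 0)) := by
        ext r; split <;> simp
      rw [this, MeasureTheory.integral_const_mul, ind_integral _ _ _ hab]
    · intro j _
      have : (fun r => if t j < r then ε j else 0) =
          (fun r => ε j * (if t j < r then (1:ℝ) else 0)) := by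
        ext r; split <;> simp
      rw [this]
      exact (ind_integrable (t j) a b).const_mul _
  have hle : ∫ r in Ioc a b, (∑ j, if t j < r then ε j else 0) ≤ 0 := by
    apply MeasureTheory.setIntegral_nonpos measurableSet_Ioc
    intro r hr
    exact hcon r hr.1 hr.2
  rw [hint] at hle
  linarith

lemma sum_pm_int {m : ℕ} (S : Finset (Fin m)) (ε : Fin m → ℝ)
    (hε : ∀ j, ε j = 1 ∨ ε j = -1) : ∃ z : ℤ, ∑ j ∈ S, ε j = (z : ℝ) := by
  classical
  induction S using Finset.induction with
  | empty => exact ⟨0, by simp⟩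
  | @insert x s hx ih =>
    obtain ⟨z, hz⟩ := ih
    rcases hε x with h | h
    · exact ⟨z + 1, by rw [Finset.sum_insert hx, hz, h]; push_cast; ring⟩
    · exact ⟨z - 1, by rw [Finset.sum_insert hx, hz, h]; push_cast; ring⟩

lemma sum_pm_ge_one {m : ℕ} (S : Finset (Fin m)) (ε : Fin m → ℝ)
    (hε : ∀ j, ε j = 1 ∨ ε j = -1) (h : 0 < ∑ j ∈ S, ε j) : 1 ≤ ∑ j ∈ S, ε j := by
  obtain ⟨z, hz⟩ := sum_pm_int S ε hε
  rw [hz] at h ⊢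
  exact_mod_cast (by exact_mod_cast h : (0:ℤ) < z)

noncomputable def tent {E : Type*} [MetricSpace E] (p : E) (r : ℝ) (x : E) : ℝ :=
  max (r - dist x p) 0

section TentLemmas
variable {E : Type*} [MetricSpace E]

lemma tent_nonneg (p : E) (r : ℝ) (x : E) : 0 ≤ tent p r x := le_max_right _ _

lemma tent_le (p : E) {r : ℝ} (hr : 0 ≤ r) (x : E) : tent p r x ≤ r :=
  max_le (by linarith [dist_nonneg (x := x) (y := p)]) hr

lemma tent_self (p : E) {r : ℝ} (hr : 0 ≤ r) : tent p r p = r := by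
  simp [tent, hr]

lemma tent_eq_zero (p : E) {r : ℝ} {x : E} (h : r ≤ dist x p) : tent p r x = 0 :=
  max_eq_right (by linarith)

lemma tent_eq (p : E) {r : ℝ} {x : E} (h : dist x p ≤ r) : tent p r x = r - dist x p :=
  max_eq_left (by linarith)

lemma tent_lip (p : E) (r : ℝ) (x y : E) : |tent p r x - tent p r y| ≤ dist x y := by
  calc |tent p r x - tent p r y| ≤ |(r - dist x p) - (r - dist y p)| :=
        abs_max_sub_max_le_abs _ _ _
    _ = |dist y p - dist x p| := by ring_nf
    _ ≤ dist y x := abs_dist_sub_le _ _ _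
    _ = dist x y := dist_comm _ _

lemma tent_pos_iff (p : E) {r : ℝ} {x : E} : tent p r x ≠ 0 ↔ dist x p < r := by
  constructor
  · intro h; by_contra h'; exact h (tent_eq_zero p (not_lt.1 h'))
  · intro h; rw [tent_eq p h.le]; intro h'; linarith

end TentLemmas

/-- Lemma 2.1: if `‖Σ d_i (δ_{a_i} - δ_{ξ_i})‖_{W^{-1,1}} ≤ ρ_a/4` then, after relabelling
the points `ξ_i`, the norm equals `Σ |a_i - ξ_i|`. -/
theorem stmt0 {n l : ℕ} (hl : 0 < l) (Ω : Set (EuclideanSpace ℝ (Fin n))) (hΩ : IsOpen Ω)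
    (a ξ : Fin l → EuclideanSpace ℝ (Fin n)) (ha : Function.Injective a)
    (haΩ : ∀ i, a i ∈ Ω) (hξΩ : ∀ i, ξ i ∈ Ω)
    (d : Fin l → ℝ) (hd : ∀ i, d i = 1 ∨ d i = -1)
    (ρa : ℝ)
    (hρa : ρa = sInf (({x | ∃ i j, i ≠ j ∧ x = dist (a i) (a j) / 2} ∪
      {x | ∃ i, x = infDist (a i) Ωᶜ} ∪ {1}) : Set ℝ))
    (hsmall : W11norm Ω (fun φ => ∑ i, d i * (φ (a i) - φ (ξ i))) ≤ ρa / 4) :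
    ∃ σ : Equiv.Perm (Fin l),
      W11norm Ω (fun φ => ∑ i, d i * (φ (a i) - φ (ξ i))) =
        ∑ i, dist (a i) (ξ (σ i)) := by
  classical
  let E := EuclideanSpace ℝ (Fin n)
  set pair : (E → ℝ) → ℝ := fun φ => ∑ i, d i * (φ (a i) - φ (ξ i)) with hpair
  set Sset : Set ℝ := {s | ∃ φ : E → ℝ,
    LipschitzWith 1 φ ∧ (∀ x, |φ x| ≤ 1) ∧ tsupport φ ⊆ Ω ∧ s = pair φ} with hSset
  have hNdef : W11norm Ω pair = sSup Sset := rfl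
  set N : ℝ := W11norm Ω pair with hN
  -- |d i| = 1
  have habsd : ∀ i, |d i| = 1 := by
    intro i; rcases hd i with h | h <;> rw [h] <;> norm_num
  have hdsq : ∀ i, d i * d i = 1 := by
    intro i; rcases hd i with h | h <;> rw [h] <;> norm_num
  -- bddAbove
  have hbdd : BddAbove Sset := by
    refine ⟨2 * l, ?_⟩
    rintro s ⟨φ, hlip, hb, hsupp, rfl⟩
    calc pair φ ≤ ∑ _i : Fin l, 2 := by
          refine Finset.sum_le_sum fun i _ => ?_
          calc d i * (φ (a i) - φ (ξ i)) ≤ |d i * (φ (a i) - φ (ξ i))| := le_abs_self _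
            _ = |d i| * |φ (a i) - φ (ξ i)| := abs_mul _ _
            _ ≤ 1 * 2 := by
                apply mul_le_mul (le_of_eq (habsd i)) ?_ (abs_nonneg _) zero_le_one
                calc |φ (a i) - φ (ξ i)| ≤ |φ (a i)| + |φ (ξ i)| := abs_sub _ _
                  _ ≤ 1 + 1 := add_le_add (hb _) (hb _)
                  _ = 2 := by norm_num
            _ = 2 := one_mul 2
      _ = 2 * l := by simp [mul_comm]
  have h0mem : (0:ℝ) ∈ Sset := by
    refine ⟨fun _ => 0, ?_, by norm_num, ?_, by simp [hpair]⟩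
    · exact (LipschitzWith.const 0).weaken zero_le_one
    · rw [show tsupport (fun _ : E => (0:ℝ)) = ∅ from by simp [tsupport]]
      exact empty_subset _
  have hSne : Sset.Nonempty := ⟨0, h0mem⟩
  have hmemle : ∀ s ∈ Sset, s ≤ N := fun s hs => le_csSup hbdd hs
  -- the set defining ρa
  set bigS : Set ℝ := ({x | ∃ i j, i ≠ j ∧ x = dist (a i) (a j) / 2} ∪
      {x | ∃ i, x = infDist (a i) Ωᶜ} ∪ {1}) with hbigS
  have hbigfin : bigS.Finite := by
    refine (Set.Finite.union (Set.Finite.union ?_ ?_) (Set.finite_singleton 1))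
    · exact Set.Finite.subset (Set.finite_range fun p : Fin l × Fin l =>
        dist (a p.1) (a p.2) / 2) (by rintro x ⟨i, j, _, rfl⟩; exact ⟨(i, j), rfl⟩)
    · exact Set.Finite.subset (Set.finite_range fun i => infDist (a i) Ωᶜ)
        (by rintro x ⟨i, rfl⟩; exact ⟨i, rfl⟩)
  have hbb : BddBelow bigS := hbigfin.bddBelow
  have h1big : (1:ℝ) ∈ bigS := Set.mem_union_right _ rfl
  -- construct the working radius ρ
  obtain ⟨ρ, hρpos, hρ1, hρsep, hρΩ, hρN⟩ :
      ∃ ρ : ℝ, 0 < ρ ∧ ρ ≤ 1 ∧ (∀ i j, i ≠ j → 2 * ρ ≤ dist (a i) (a j)) ∧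
        (∀ (x : E) (i : Fin l) (r : ℝ), r < ρ → dist x (a i) ≤ r → x ∈ Ω) ∧
        N ≤ ρ / 4 := by
    rcases Set.eq_empty_or_nonempty Ωᶜ with hc | hc
    · -- Ω = univ
      set smallS : Set ℝ :=
        ({x | ∃ i j, i ≠ j ∧ x = dist (a i) (a j) / 2} ∪ {1}) with hsmallS
      have hsub : smallS ⊆ bigS := by
        rintro x (h | h)
        · exact Or.inl (Or.inl h)
        · exact Or.inr h
      have hfin : smallS.Finite := hbigfin.subset hsub
      have hne : smallS.Nonempty := ⟨1, Or.inr rfl⟩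
      refine ⟨sInf smallS, ?_, ?_, ?_, ?_, ?_⟩
      · rcases hne.csInf_mem hfin with (⟨i, j, hij, hx⟩ | hx)
        · rw [hx]; have := dist_pos.2 (fun h => hij (ha h)); linarith
        · rw [hx]; norm_num
      · exact csInf_le hfin.bddBelow (Or.inr rfl)
      · intro i j hij
        have := csInf_le hfin.bddBelow (Or.inl ⟨i, j, hij, rfl⟩ : _ ∈ smallS)
        linarith
      · intro x i r _ _
        by_contra h
        rw [← Set.mem_compl_iff, hc] at h
        exact h
      · have : ρa ≤ sInf smallS := by
          rw [hρa]; exact csInf_le_csInf hbb hne hsub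
        linarith [hsmall]
    · -- Ωᶜ nonempty
      refine ⟨ρa, ?_, ?_, ?_, ?_, by linarith [hsmall]⟩
      · have hmem := (Set.Nonempty.csInf_mem ⟨1, h1big⟩ hbigfin)
        rw [← hρa] at hmem
        rcases hmem with ((⟨i, j, hij, hx⟩ | ⟨i, hx⟩) | hx)
        · rw [hx]; have := dist_pos.2 (fun h => hij (ha h)); linarith
        · rw [hx]
          exact (hΩ.isClosed_compl.notMem_iff_infDist_pos hc).mp (by simpa using haΩ i)
        · rw [hx]; norm_num
      · rw [hρa]; exact csInf_le hbb h1big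
      · intro i j hij
        have : ρa ≤ dist (a i) (a j) / 2 := by
          rw [hρa]; exact csInf_le hbb (Or.inl (Or.inl ⟨i, j, hij, rfl⟩))
        linarith
      · intro x i r hr hdist
        by_contra h
        have hxc : x ∈ Ωᶜ := h
        have h1 : infDist (a i) Ωᶜ ≤ dist (a i) x := infDist_le_dist_of_mem hxc
        have h2 : ρa ≤ infDist (a i) Ωᶜ := by
          rw [hρa]; exact csInf_le hbb (Or.inl (Or.inr ⟨i, rfl⟩))
        rw [dist_comm] at h1
        linarith
  -- tent test functions give elements of Sset
  have htentmem : ∀ (s : ℝ), |s| ≤ 1 → ∀ (p : E) (r : ℝ), 0 < r → r ≤ 1 →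
      (∀ x, dist x p ≤ r → x ∈ Ω) → pair (fun x => s * tent p r x) ∈ Sset := by
    intro s hs p r hr hr1 hsupp
    refine ⟨fun x => s * tent p r x, ?_, ?_, ?_, rfl⟩
    · apply LipschitzWith.of_dist_le_mul
      intro x y
      rw [Real.dist_eq, NNReal.coe_one, one_mul]
      calc |s * tent p r x - s * tent p r y| = |s| * |tent p r x - tent p r y| := by
            rw [← abs_mul]; ring_nf
        _ ≤ 1 * |tent p r x - tent p r y| :=
            mul_le_mul_of_nonneg_right hs (abs_nonneg _)
        _ = |tent p r x - tent p r y| := one_mul _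
        _ ≤ dist x y := tent_lip p r x y
    · intro x
      calc |s * tent p r x| = |s| * |tent p r x| := abs_mul _ _
        _ ≤ 1 * 1 := by
            apply mul_le_mul hs ?_ (abs_nonneg _) zero_le_one
            rw [abs_of_nonneg (tent_nonneg p r x)]
            exact le_trans (tent_le p hr.le x) hr1
        _ = 1 := one_mul 1
    · apply closure_minimal ?_ isClosed_closedBall |>.trans
      · intro x hx
        exact hsupp x (mem_closedBall.mp hx)
      · intro x hx
        simp only [Function.mem_support, ne_eq] at hx
        have : tent p r x ≠ 0 := fun h => hx (by rw [h, mul_zero])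
        exact mem_closedBall.mpr (le_of_lt ((tent_pos_iff p).mp this))
  -- the pairing of a tent centered at a i
  have hcalc : ∀ (i : Fin l) (s r : ℝ), 0 < r → r < ρ →
      pair (fun x => s * tent (a i) r x) =
        s * (d i * r - ∑ j, d j * tent (a i) r (ξ j)) := by
    intro i s r hr hrρ
    have ha_tent : ∀ j, j ≠ i → tent (a i) r (a j) = 0 := by
      intro j hj
      apply tent_eq_zero
      have := hρsep j i hj
      linarith
    rw [hpair]
    simp only
    have : ∀ j : Fin l, d j * (s * tent (a i) r (a j) - s * tent (a i) r (ξ j)) =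
        d j * s * tent (a i) r (a j) - s * (d j * tent (a i) r (ξ j)) := by
      intro j; ring
    rw [Finset.sum_congr rfl (fun j _ => this j), Finset.sum_sub_distrib,
      ← Finset.mul_sum]
    have hsingle : ∑ j, d j * s * tent (a i) r (a j) = d i * s * r := by
      rw [Finset.sum_eq_single i]
      · rw [tent_self _ hr.le]
      · intro j _ hj; rw [ha_tent j hj, mul_zero]
      · intro h; exact absurd (Finset.mem_univ i) h
    rw [hsingle]; ring
  -- the key constraint from smallness
  set F : Fin l → ℝ → ℝ := fun i r => ∑ j, (d i * d j) * max (r - dist (ξ j) (a i)) 0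
    with hF
  have htent_val : ∀ (i : Fin l) (r : ℝ), d i * ∑ j, d j * tent (a i) r (ξ j) = F i r := by
    intro i r
    rw [hF, Finset.mul_sum]
    refine Finset.sum_congr rfl fun j _ => ?_
    rw [tent]; ring
  have hconstraint : ∀ (i : Fin l) (r : ℝ), 0 < r → r < ρ → |r - F i r| ≤ ρ / 4 := by
    intro i r hr hrρ
    have hr1 : r ≤ 1 := le_trans hrρ.le hρ1
    have hsupp : ∀ x, dist x (a i) ≤ r → x ∈ Ω := fun x hx => hρΩ x i r hrρ hx
    have hub : ∀ s : ℝ, |s| ≤ 1 →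
        s * (d i * r - ∑ j, d j * tent (a i) r (ξ j)) ≤ ρ / 4 := by
      intro s hs
      have h1 := hmemle _ (htentmem s hs (a i) r hr hr1 hsupp)
      rw [hcalc i s r hr hrρ] at h1
      linarith [hρN]
    have h1 := hub (d i) (le_of_eq (habsd i))
    have h2 := hub (-(d i)) (by rw [abs_neg]; exact le_of_eq (habsd i))
    have he : d i * (d i * r - ∑ j, d j * tent (a i) r (ξ j)) = r - F i r := by
      rw [mul_sub, ← mul_assoc, hdsq i, one_mul, ← htent_val i r]
    rw [he] at h1
    rw [neg_mul, he] at h2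
    rw [abs_le]; constructor <;> linarith
  -- find, for each i, a radius R i where the net charge is ≥ 1
  have hkey : ∀ i : Fin l, ∃ r, ρ / 4 < r ∧ r ≤ ρ * (15 / 16) ∧
      1 ≤ ∑ j ∈ Finset.univ.filter (fun j => dist (ξ j) (a i) < r), d i * d j := by
    intro i
    have hεpm : ∀ j, d i * d j = 1 ∨ d i * d j = -1 := by
      intro j
      rcases hd i with h1 | h1 <;> rcases hd j with h2 | h2 <;>
        rw [h1, h2] <;> norm_num
    have hab : ρ / 4 ≤ ρ * (15 / 16) := by linarith
    have hFa := hconstraint i (ρ / 4) (by linarith) (by linarith)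
    have hFb := hconstraint i (ρ * (15 / 16)) (by linarith) (by linarith)
    rw [abs_le] at hFa hFb
    have hpos : 0 < ∑ j, (d i * d j) *
        (max (ρ * (15 / 16) - dist (ξ j) (a i)) 0 - max (ρ / 4 - dist (ξ j) (a i)) 0) := by
      have : ∑ j, (d i * d j) *
          (max (ρ * (15 / 16) - dist (ξ j) (a i)) 0 - max (ρ / 4 - dist (ξ j) (a i)) 0) =
          F i (ρ * (15 / 16)) - F i (ρ / 4) := by
        rw [hF, ← Finset.sum_sub_distrib]
        refine Finset.sum_congr rfl fun j _ => ?_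
        ring
      rw [this]
      linarith [hFa.1, hFa.2, hFb.1, hFb.2]
    obtain ⟨r, hr1, hr2, hr3⟩ := exists_threshold (fun j => d i * d j)
      (fun j => dist (ξ j) (a i)) (ρ / 4) (ρ * (15 / 16)) hab hpos
    refine ⟨r, hr1, hr2, sum_pm_ge_one _ _ hεpm ?_⟩
    rw [Finset.sum_filter]
    exact hr3
  choose R hR1 hR2 hRnet using hkey
  set T : Fin l → Finset (Fin l) :=
    fun i => Finset.univ.filter (fun j => dist (ξ j) (a i) < R i) with hT
  -- disjointness
  have hdisj : ∀ i i', i ≠ i' → Disjoint (T i) (T i') := by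
    intro i i' hii
    rw [Finset.disjoint_left]
    intro j hj hj'
    rw [hT, Finset.mem_filter] at hj hj'
    have h1 : dist (ξ j) (a i) < ρ := lt_of_lt_of_le hj.2 (by linarith [hR2 i])
    have h2 : dist (ξ j) (a i') < ρ := lt_of_lt_of_le hj'.2 (by linarith [hR2 i'])
    have h3 := hρsep i i' hii
    have h4 : dist (a i) (a i') ≤ dist (a i) (ξ j) + dist (ξ j) (a i') := dist_triangle _ _ _
    rw [dist_comm (a i) (ξ j)] at h4
    linarith
  -- every T i has exactly one element
  have hcard1 : ∀ i, 1 ≤ (T i).card := by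
    intro i
    have h1 : (1:ℝ) ≤ ∑ j ∈ T i, d i * d j := hRnet i
    have h2 : ∑ j ∈ T i, d i * d j ≤ (T i).card := by
      rw [Finset.card_eq_sum_ones, Nat.cast_sum]
      apply Finset.sum_le_sum
      intro j _
      rcases hd i with hi | hi <;> rcases hd j with hj | hj <;>
        rw [hi, hj] <;> norm_num
    have : (1:ℝ) ≤ (T i).card := le_trans h1 h2
    exact_mod_cast this
  have hsumcard : ∑ i, (T i).card ≤ l := by
    rw [← Finset.card_biUnion (fun i _ j _ hij => hdisj i j hij)]
    calc (Finset.univ.biUnion T).card ≤ (Finset.univ : Finset (Fin l)).card :=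
          Finset.card_le_univ _
      _ = l := by simp
  have hallone : ∀ i, (T i).card = 1 := by
    have h1 : ∑ i : Fin l, 1 ≤ ∑ i, (T i).card :=
      Finset.sum_le_sum fun i _ => hcard1 i
    have h2 : ∑ i : Fin l, 1 = l := by simp
    have heq : ∑ i : Fin l, 1 = ∑ i, (T i).card := le_antisymm h1 (by omega)
    intro i
    exact ((Finset.sum_eq_sum_iff_of_le fun i _ => hcard1 i).mp heq i
      (Finset.mem_univ i)).symm
  have hsingle : ∀ i, ∃ b, T i = {b} := fun i => Finset.card_eq_one.mp (hallone i)
  choose g hg using hsingle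
  have hgmem : ∀ i, g i ∈ T i := fun i => by rw [hg i]; exact Finset.mem_singleton_self _
  have hgdist : ∀ i, dist (ξ (g i)) (a i) < R i := by
    intro i
    have := hgmem i
    rw [hT, Finset.mem_filter] at this
    exact this.2
  have hgd : ∀ i, d (g i) = d i := by
    intro i
    have h1 : (1:ℝ) ≤ ∑ j ∈ T i, d i * d j := hRnet i
    rw [hg i, Finset.sum_singleton] at h1
    rcases hd i with hi | hi <;> rcases hd (g i) with hj | hj <;>
      rw [hi, hj] at h1 ⊢ <;> first | rfl | (exfalso; norm_num at h1)
  have hginj : Function.Injective g := by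
    intro i i' hii
    by_contra hne
    have := hdisj i i' hne
    rw [Finset.disjoint_left] at this
    exact this (hgmem i) (hii ▸ hgmem i')
  have hgbij : Function.Bijective g := Finite.injective_iff_bijective.mp hginj
  set σ : Equiv.Perm (Fin l) := Equiv.ofBijective g hgbij with hσ
  have hσg : ∀ i, σ i = g i := fun i => rfl
  refine ⟨σ, ?_⟩
  -- final radius
  set r₀ : ℝ := ρ * (31 / 32) with hr₀
  have hr₀pos : 0 < r₀ := by rw [hr₀]; linarith
  have hr₀lt : r₀ < ρ := by rw [hr₀]; linarith
  have hr₀1 : r₀ ≤ 1 := by linarith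
  have hgdist' : ∀ i, dist (ξ (g i)) (a i) < r₀ := by
    intro i
    calc dist (ξ (g i)) (a i) < R i := hgdist i
      _ ≤ ρ * (15 / 16) := hR2 i
      _ < r₀ := by rw [hr₀]; linarith
  -- final test function
  set φ : E → ℝ := fun x => ∑ i, d i * tent (a i) r₀ x with hφ
  have huniq : ∀ (x : E) (i i' : Fin l), i ≠ i' → tent (a i) r₀ x ≠ 0 →
      tent (a i') r₀ x = 0 := by
    intro x i i' hii hi
    by_contra h'
    have h1 := (tent_pos_iff (a i)).mp hi
    have h2 := (tent_pos_iff (a i')).mp h'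
    have h3 := hρsep i i' hii
    have h4 : dist (a i) (a i') ≤ dist (a i) x + dist x (a i') := dist_triangle _ _ _
    rw [dist_comm (a i) x] at h4
    linarith
  have hφeq : ∀ (x : E) (i : Fin l), tent (a i) r₀ x ≠ 0 →
      φ x = d i * tent (a i) r₀ x := by
    intro x i hi
    rw [hφ]
    apply Finset.sum_eq_single_of_mem i (Finset.mem_univ i)
    intro b _ hb
    rw [huniq x i b (Ne.symm hb) hi, mul_zero]
  have hφzero : ∀ x : E, (∀ i, tent (a i) r₀ x = 0) → φ x = 0 := by
    intro x hx
    rw [hφ]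
    apply Finset.sum_eq_zero
    intro i _
    rw [hx i, mul_zero]
  -- φ is admissible
  have hφmem : (∑ i, dist (a i) (ξ (σ i))) ∈ Sset := by
    have hφlip : LipschitzWith 1 φ := by
      apply LipschitzWith.of_dist_le_mul
      intro x y
      rw [Real.dist_eq, NNReal.coe_one, one_mul]
      by_cases hx : ∃ i, tent (a i) r₀ x ≠ 0
      · obtain ⟨i, hi⟩ := hx
        by_cases hy : ∃ i', tent (a i') r₀ y ≠ 0
        · obtain ⟨i', hi'⟩ := hy
          by_cases hii : i = i'
          · subst hii
            rw [hφeq x i hi, hφeq y i hi', ← mul_sub, abs_mul, habsd i, one_mul]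
            exact tent_lip _ _ _ _
          · rw [hφeq x i hi, hφeq y i' hi']
            have h1 := (tent_pos_iff (a i)).mp hi
            have h2 := (tent_pos_iff (a i')).mp hi'
            have h3 := hρsep i i' hii
            have h4 : dist (a i) (a i') ≤ dist (a i) x + dist x y + dist y (a i') := by
              calc dist (a i) (a i') ≤ dist (a i) y + dist y (a i') := dist_triangle _ _ _
                _ ≤ dist (a i) x + dist x y + dist y (a i') := by
                    have := dist_triangle (a i) x y
                    linarith
            calc |d i * tent (a i) r₀ x - d i' * tent (a i') r₀ y|
                ≤ |d i * tent (a i) r₀ x| + |d i' * tent (a i') r₀ y| := abs_sub _ _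
              _ = tent (a i) r₀ x + tent (a i') r₀ y := by
                  rw [abs_mul, abs_mul, habsd i, habsd i', one_mul, one_mul,
                    abs_of_nonneg (tent_nonneg _ _ _), abs_of_nonneg (tent_nonneg _ _ _)]
              _ ≤ dist x y := by
                  rw [tent_eq _ h1.le, tent_eq _ h2.le]
                  rw [dist_comm (a i) x] at h4
                  linarith [hr₀lt]
        · push_neg at hy
          rw [hφeq x i hi, hφzero y hy]
          have h0 : tent (a i) r₀ y = 0 := hy i
          rw [sub_zero, abs_mul, habsd i, one_mul, abs_of_nonneg (tent_nonneg _ _ _)]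
          calc tent (a i) r₀ x = tent (a i) r₀ x - tent (a i) r₀ y := by rw [h0, sub_zero]
            _ ≤ |tent (a i) r₀ x - tent (a i) r₀ y| := le_abs_self _
            _ ≤ dist x y := tent_lip _ _ _ _
      · push_neg at hx
        by_cases hy : ∃ i', tent (a i') r₀ y ≠ 0
        · obtain ⟨i', hi'⟩ := hy
          rw [hφzero x hx, hφeq y i' hi']
          have h0 : tent (a i') r₀ x = 0 := hx i'
          rw [zero_sub, abs_neg, abs_mul, habsd i', one_mul,
            abs_of_nonneg (tent_nonneg _ _ _)]
          calc tent (a i') r₀ y = tent (a i') r₀ y - tent (a i') r₀ x := by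
                rw [h0, sub_zero]
            _ ≤ |tent (a i') r₀ y - tent (a i') r₀ x| := le_abs_self _
            _ ≤ dist y x := tent_lip _ _ _ _
            _ = dist x y := dist_comm _ _
        · push_neg at hy
          rw [hφzero x hx, hφzero y hy, sub_zero, abs_zero]
          exact dist_nonneg
    have hφbnd : ∀ x, |φ x| ≤ 1 := by
      intro x
      by_cases hx : ∃ i, tent (a i) r₀ x ≠ 0
      · obtain ⟨i, hi⟩ := hx
        rw [hφeq x i hi, abs_mul, habsd i, one_mul, abs_of_nonneg (tent_nonneg _ _ _)]
        exact le_trans (tent_le _ hr₀pos.le _) hr₀1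
      · push_neg at hx
        rw [hφzero x hx, abs_zero]
        exact zero_le_one
    have hφsupp : tsupport φ ⊆ Ω := by
      apply closure_minimal ?_ (isClosed_iUnion_of_finite
        (fun i : Fin l => isClosed_closedBall (x := a i) (ε := r₀))) |>.trans ?_
      · intro x hx
        simp only [Function.mem_support, ne_eq] at hx
        have : ∃ i, tent (a i) r₀ x ≠ 0 := by
          by_contra h
          push_neg at h
          exact hx (hφzero x h)
        obtain ⟨i, hi⟩ := this
        exact Set.mem_iUnion.mpr ⟨i, mem_closedBall.mpr ((tent_pos_iff _).mp hi).le⟩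
      · apply Set.iUnion_subset
        intro i x hx
        exact hρΩ x i r₀ hr₀lt (mem_closedBall.mp hx)
    have hφval : pair φ = ∑ i, dist (a i) (ξ (σ i)) := by
      have h1 : ∀ i : Fin l, φ (a i) = d i * r₀ := by
        intro i
        rw [hφeq (a i) i (by rw [tent_self _ hr₀pos.le]; exact ne_of_gt hr₀pos),
          tent_self _ hr₀pos.le]
      have h2 : ∀ i : Fin l, φ (ξ (g i)) = d i * (r₀ - dist (ξ (g i)) (a i)) := by
        intro i
        have hne : tent (a i) r₀ (ξ (g i)) ≠ 0 :=
          (tent_pos_iff _).mpr (hgdist' i)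
        rw [hφeq _ i hne, tent_eq _ (hgdist' i).le]
      rw [hpair]
      simp only
      have hsplit : ∑ i, d i * (φ (a i) - φ (ξ i)) =
          (∑ i, d i * φ (a i)) - ∑ i, d i * φ (ξ i) := by
        rw [← Finset.sum_sub_distrib]
        exact Finset.sum_congr rfl fun i _ => by ring
      rw [hsplit]
      have hA : ∑ i, d i * φ (a i) = ∑ i : Fin l, r₀ := by
        refine Finset.sum_congr rfl fun i _ => ?_
        rw [h1 i, ← mul_assoc, hdsq i, one_mul]
      have hB : ∑ i, d i * φ (ξ i) = ∑ i : Fin l, (r₀ - dist (ξ (g i)) (a i)) := by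
        rw [← Equiv.sum_comp σ (fun i => d i * φ (ξ i))]
        refine Finset.sum_congr rfl fun i _ => ?_
        rw [hσg i, hgd i, h2 i, ← mul_assoc, hdsq i, one_mul]
      rw [hA, hB, ← Finset.sum_sub_distrib]
      refine Finset.sum_congr rfl fun i _ => ?_
      rw [hσg i, dist_comm]
      ring
    exact ⟨φ, hφlip, hφbnd, hφsupp, hφval.symm⟩
  -- conclude
  have hle1 : ∑ i, dist (a i) (ξ (σ i)) ≤ N := hmemle _ hφmem
  have hle2 : N ≤ ∑ i, dist (a i) (ξ (σ i)) := by
    rw [hNdef]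
    apply csSup_le hSne
    rintro s ⟨ψ, hψlip, hψbnd, hψsupp, rfl⟩
    rw [hpair]
    simp only
    have hsplit : ∑ i, d i * (ψ (a i) - ψ (ξ i)) =
        ∑ i, d i * (ψ (a i) - ψ (ξ (σ i))) := by
      have : ∑ i, d i * ψ (ξ i) = ∑ i, d i * ψ (ξ (σ i)) := by
        rw [← Equiv.sum_comp σ (fun i => d i * ψ (ξ i))]
        refine Finset.sum_congr rfl fun i _ => ?_
        rw [hσg i, hgd i]
      calc ∑ i, d i * (ψ (a i) - ψ (ξ i))
          = (∑ i, d i * ψ (a i)) - ∑ i, d i * ψ (ξ i) := by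
            rw [← Finset.sum_sub_distrib]
            exact Finset.sum_congr rfl fun i _ => by ring
        _ = (∑ i, d i * ψ (a i)) - ∑ i, d i * ψ (ξ (σ i)) := by rw [this]
        _ = ∑ i, d i * (ψ (a i) - ψ (ξ (σ i))) := by
            rw [← Finset.sum_sub_distrib]
            exact Finset.sum_congr rfl fun i _ => by ring
    rw [hsplit]
    apply Finset.sum_le_sum
    intro i _
    calc d i * (ψ (a i) - ψ (ξ (σ i))) ≤ |d i * (ψ (a i) - ψ (ξ (σ i)))| := le_abs_self _
      _ = |ψ (a i) - ψ (ξ (σ i))| := by rw [abs_mul, habsd i, one_mul]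
      _ ≤ dist (a i) (ξ (σ i)) := by
          have := hψlip.dist_le_mul (a i) (ξ (σ i))
          rw [Real.dist_eq] at this
          simpa using this
  exact le_antisymm hle2 hle1
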